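/- Let G₁, …, G_p be graphs with designated vertices s_i, t_i in G_i, and let G be obtained by taking their disjoint union, identifying t_i with s_{i+1} for i = 1,…,p−1 into vertices st_i, and attaching k+ℓ+1 new degree-one neighbors to each st_i (1 ≤ i ≤ p−1). Set s = s₁ and t = t_p. Then G has an s-t separator S with |S| ≤ k and |N_G(S)| ≤ ℓ if and only if there exists q ∈ {1,…,p} such that G_q has an s_q-t_q separator S_q with |S_q| ≤ k and |N_{G_q}(S_q)| ≤ ℓ. -/

import Mathlib

/-- Open neighborhood of a vertex set. -/
def openNbhd {V : Type*} (G : SimpleGraph V) (S : Set V) : Set V :=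
  {v | v ∉ S ∧ ∃ u ∈ S, G.Adj u v}

/-- `S` is an `s`-`t` separator: it avoids `s` and `t` and meets every `s`-`t` walk. -/
def Separates {V : Type*} (G : SimpleGraph V) (s t : V) (S : Set V) : Prop :=
  s ∉ S ∧ t ∉ S ∧ ∀ w : G.Walk s t, ∃ v ∈ w.support, v ∈ S

open SimpleGraph

namespace SmallSecluded

structure Setup {W : Type*} (G : SimpleGraph W) (p : ℕ) (A : Fin p → Set W)
    (s t : Fin p → W) : Prop where
  hp : 0 < p
  hst : ∀ i, s i ≠ t i
  hsA : ∀ i, s i ∈ A i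
  htA : ∀ i, t i ∈ A i
  hglue : ∀ i j : Fin p, (j : ℕ) = (i : ℕ) + 1 → t i = s j
  hinter : ∀ i j : Fin p, i < j →
      (((j : ℕ) = (i : ℕ) + 1 → A i ∩ A j = {t i}) ∧
       ((j : ℕ) ≠ (i : ℕ) + 1 → A i ∩ A j = ∅))
  hpend : ∀ w : W, w ∉ (⋃ i, A i) →
      ∃ i : Fin p, (i : ℕ) + 1 < p ∧ G.neighborSet w = {t i}
  hedge : ∀ a b : W, G.Adj a b →
      (∃ i, a ∈ A i ∧ b ∈ A i) ∨ a ∉ (⋃ i, A i) ∨ b ∉ (⋃ i, A i)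

variable {W : Type*} {G : SimpleGraph W} {p : ℕ} {A : Fin p → Set W} {s t : Fin p → W}

lemma mem_two (H : Setup G p A s t) {v : W} {i j : Fin p} (hi : v ∈ A i) (hj : v ∈ A j)
    (hlt : (i : ℕ) < (j : ℕ)) : (j : ℕ) = (i : ℕ) + 1 ∧ v = t i := by
  have hij : i < j := hlt
  by_cases h : (j : ℕ) = (i : ℕ) + 1
  · have h1 := (H.hinter i j hij).1 h
    have : v ∈ ({t i} : Set W) := h1 ▸ ⟨hi, hj⟩
    exact ⟨h, this⟩
  · have h1 := (H.hinter i j hij).2 h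
    exact absurd (h1 ▸ ⟨hi, hj⟩ : v ∈ (∅ : Set W)) (by simp)

lemma t_ne_succ (H : Setup G p A s t) {i j : Fin p} (h : (j : ℕ) = (i : ℕ) + 1) :
    t i ≠ t j := by
  intro he
  exact H.hst j (by rw [← H.hglue i j h, he])

lemma t_min (H : Setup G p A s t) {m n : Fin p} (h : (m : ℕ) < (n : ℕ)) : t n ∉ A m := by
  intro hmem
  obtain ⟨h1, h2⟩ := mem_two H hmem (H.htA n) h
  exact t_ne_succ H h1 h2.symm

lemma pend_ex (H : Setup G p A s t) {v : W} (hv : ¬∃ n : ℕ, ∃ h : n < p, v ∈ A ⟨n, h⟩) :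
    ∃ i : Fin p, (i : ℕ) + 1 < p ∧ G.neighborSet v = {t i} :=
  H.hpend v (fun hmem => hv (by
    obtain ⟨i, hi⟩ := Set.mem_iUnion.mp hmem
    exact ⟨i, i.isLt, hi⟩))

open Classical in
noncomputable def phi (H : Setup G p A s t) (v : W) : ℕ :=
  if hv : ∃ n : ℕ, ∃ h : n < p, v ∈ A ⟨n, h⟩ then
    if ∃ m : ℕ, ∃ h : m < p, m ≠ Nat.find hv ∧ v ∈ A ⟨m, h⟩ then 2 * Nat.find hv + 2
    else 2 * Nat.find hv + 1
  else 2 * ↑(Classical.choose (pend_ex H hv)) + 2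

lemma phi_spec_mem (H : Setup G p A s t) {v : W} {n : ℕ} (hn : n < p) (hv : v ∈ A ⟨n, hn⟩) :
    (phi H v = 2 * n + 1 ∧ ∀ m (hm : m < p), v ∈ A ⟨m, hm⟩ → m = n) ∨
    (∃ (m : ℕ) (hm : m + 1 < p), v = t ⟨m, Nat.lt_of_succ_lt hm⟩ ∧ phi H v = 2 * m + 2 ∧
      (n = m ∨ n = m + 1)) := by
  classical
  have hex : ∃ n' : ℕ, ∃ h : n' < p, v ∈ A ⟨n', h⟩ := ⟨n, hn, hv⟩
  obtain ⟨hm0p, hvm0⟩ := Nat.find_spec hex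
  have hm0n : Nat.find hex ≤ n := Nat.find_le ⟨hn, hv⟩
  by_cases g : ∃ m : ℕ, ∃ h : m < p, m ≠ Nat.find hex ∧ v ∈ A ⟨m, h⟩
  · right
    obtain ⟨m', hm'p, hne, hvm'⟩ := id g
    have hgt : Nat.find hex < m' := by
      rcases Nat.lt_or_ge m' (Nat.find hex) with h | h
      · exact absurd ⟨hm'p, hvm'⟩ (Nat.find_min hex h)
      · omega
    obtain ⟨he1, he2⟩ := mem_two H hvm0 hvm' (by exact hgt)
    have he1' : m' = Nat.find hex + 1 := by simpa using he1
    refine ⟨Nat.find hex, by omega, he2, ?_, ?_⟩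
    · rw [phi, dif_pos hex, if_pos g]
    · rcases Nat.lt_or_ge (Nat.find hex) n with h | h
      · obtain ⟨h1, _⟩ := mem_two H hvm0 hv (by exact h)
        have h1' : n = Nat.find hex + 1 := by simpa using h1
        omega
      · omega
  · left
    have huniq : ∀ m (hm : m < p), v ∈ A ⟨m, hm⟩ → m = Nat.find hex := by
      intro m hm hvm
      by_contra hne
      exact g ⟨m, hm, hne, hvm⟩
    have hn0 : n = Nat.find hex := huniq n hn hv
    constructor
    · rw [phi, dif_pos hex, if_neg g, hn0]
    · intro m hm hvm; rw [huniq m hm hvm, hn0]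

lemma phi_mem_cases (H : Setup G p A s t) {v : W} {n : ℕ} (hn : n < p) (hv : v ∈ A ⟨n, hn⟩) :
    phi H v = 2 * n ∨ phi H v = 2 * n + 1 ∨ phi H v = 2 * n + 2 := by
  rcases phi_spec_mem H hn hv with ⟨h, _⟩ | ⟨m, hm, _, hphi, hnm⟩ <;> omega

lemma phi_eq_top (H : Setup G p A s t) {v : W} {n : ℕ} (hn : n < p) (hv : v ∈ A ⟨n, hn⟩)
    (he : phi H v = 2 * n + 2) : n + 1 < p ∧ v = t ⟨n, hn⟩ := by
  rcases phi_spec_mem H hn hv with ⟨h, _⟩ | ⟨m, hm, hvt, hphi, hnm⟩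
  · omega
  · have : m = n := by omega
    subst this
    exact ⟨hm, hvt⟩

lemma phi_t (H : Setup G p A s t) {n : ℕ} (hn : n + 1 < p) :
    phi H (t ⟨n, Nat.lt_of_succ_lt hn⟩) = 2 * n + 2 := by
  have hv := H.htA ⟨n, Nat.lt_of_succ_lt hn⟩
  rcases phi_spec_mem H (Nat.lt_of_succ_lt hn) hv with ⟨h, huniq⟩ | ⟨m, hm, hvt, hphi, hnm⟩
  · exfalso
    have hmem : t ⟨n, Nat.lt_of_succ_lt hn⟩ ∈ A ⟨n + 1, hn⟩ := by
      rw [H.hglue ⟨n, Nat.lt_of_succ_lt hn⟩ ⟨n + 1, hn⟩ rfl]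
      exact H.hsA _
    have := huniq (n + 1) hn hmem
    omega
  · rcases hnm with h | h
    · omega
    · exfalso
      exact t_ne_succ H (by simp [h]) hvt.symm

lemma phi_s0 (H : Setup G p A s t) : phi H (s ⟨0, H.hp⟩) = 1 := by
  rcases phi_spec_mem H H.hp (H.hsA ⟨0, H.hp⟩) with ⟨h, _⟩ | ⟨m, hm, hvt, hphi, hnm⟩
  · omega
  · exfalso
    have hm0 : m = 0 := by omega
    subst hm0
    exact H.hst ⟨0, H.hp⟩ hvt

lemma phi_tlast (H : Setup G p A s t) :
    phi H (t ⟨p - 1, Nat.sub_lt H.hp one_pos⟩) = 2 * (p - 1) + 1 := by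
  have hv := H.htA ⟨p - 1, Nat.sub_lt H.hp one_pos⟩
  rcases phi_spec_mem H (Nat.sub_lt H.hp one_pos) hv with ⟨h, _⟩ | ⟨m, hm, hvt, hphi, hnm⟩
  · exact h
  · exfalso
    have : p - 1 = m + 1 := by omega
    exact t_ne_succ H (i := ⟨m, Nat.lt_of_succ_lt hm⟩) (by simp [this]) hvt.symm

lemma phi_pend (H : Setup G p A s t) {v : W} (hv : v ∉ (⋃ i, A i)) :
    ∃ i : Fin p, (i : ℕ) + 1 < p ∧ G.neighborSet v = {t i} ∧ phi H v = 2 * (i : ℕ) + 2 := by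
  classical
  have hnex : ¬∃ n : ℕ, ∃ h : n < p, v ∈ A ⟨n, h⟩ := by
    rintro ⟨n, hn, hmem⟩
    exact hv (Set.mem_iUnion.mpr ⟨⟨n, hn⟩, hmem⟩)
  rw [phi, dif_neg hnex]
  exact ⟨Classical.choose (pend_ex H hnex), (Classical.choose_spec (pend_ex H hnex)).1,
    (Classical.choose_spec (pend_ex H hnex)).2, rfl⟩


lemma phi_even (H : Setup G p A s t) {v : W} {j : ℕ} (hj : j + 1 < p)
    (he : phi H v = 2 * j + 2) :
    v = t ⟨j, Nat.lt_of_succ_lt hj⟩ ∨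
      (v ∉ (⋃ i, A i) ∧ G.neighborSet v = {t ⟨j, Nat.lt_of_succ_lt hj⟩}) := by
  by_cases hv : v ∈ (⋃ i, A i)
  · left
    obtain ⟨i, hi⟩ := Set.mem_iUnion.mp hv
    rcases phi_spec_mem H i.isLt (v := v) (by exact hi) with ⟨h, _⟩ | ⟨m, hm, hvt, hphi, _⟩
    · omega
    · have : m = j := by omega
      subst this
      exact hvt
  · right
    obtain ⟨i2, hi2, hnb, hphi⟩ := phi_pend H hv
    have : (i2 : ℕ) = j := by omega
    have hi2j : i2 = ⟨j, Nat.lt_of_succ_lt hj⟩ := Fin.ext this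
    exact ⟨hv, hi2j ▸ hnb⟩

lemma adj_no_skip (H : Setup G p A s t) {a b : W} (hab : G.Adj a b) (j : ℕ) :
    ¬(phi H a < 2 * j ∧ 2 * j < phi H b) := by
  rintro ⟨h1, h2⟩
  rcases H.hedge a b hab with ⟨i, hai, hbi⟩ | ha | hb
  · have c1 := phi_mem_cases H i.isLt (v := a) (by exact hai)
    have c2 := phi_mem_cases H i.isLt (v := b) (by exact hbi)
    omega
  · obtain ⟨i2, hi2, hnb, hphi⟩ := phi_pend H ha
    have hbt : b = t i2 := by
      have : b ∈ G.neighborSet a := hab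
      rwa [hnb] at this
    have : phi H b = 2 * (i2 : ℕ) + 2 := by
      rw [hbt]
      exact phi_t H hi2
    omega
  · obtain ⟨i2, hi2, hnb, hphi⟩ := phi_pend H hb
    have hat : a = t i2 := by
      have : a ∈ G.neighborSet b := hab.symm
      rwa [hnb] at this
    have : phi H a = 2 * (i2 : ℕ) + 2 := by
      rw [hat]
      exact phi_t H hi2
    omega

lemma ivt (H : Setup G p A s t) {a b : W} (w : G.Walk a b) (j : ℕ)
    (h1 : phi H a ≤ 2 * j) (h2 : 2 * j ≤ phi H b) :
    ∃ v ∈ w.support, phi H v = 2 * j := by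
  induction w with
  | nil =>
    simp only [Walk.support_nil, List.mem_singleton]
    exact ⟨_, rfl, by omega⟩
  | @cons a c b hadj w' ih =>
    by_cases hc : phi H c ≤ 2 * j
    · obtain ⟨v, hv, he⟩ := ih hc h2
      exact ⟨v, by simp [hv], he⟩
    · rcases eq_or_lt_of_le h1 with h | h
      · exact ⟨a, by simp, h⟩
      · exact absurd ⟨h, by omega⟩ (adj_no_skip H hadj j)

lemma walk_pred {a b : W} (w : G.Walk a b) {v : W} (hv : v ∈ w.support) :
    v = a ∨ ∃ u ∈ w.support, G.Adj u v := by
  induction w with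
  | nil => exact Or.inl (by simpa using hv)
  | @cons a c b hadj w' ih =>
    rw [Walk.support_cons, List.mem_cons] at hv
    rcases hv with h | h
    · exact Or.inl h
    · rcases ih h with h2 | ⟨u, hu, hadj2⟩
      · exact Or.inr ⟨a, by simp, h2 ▸ hadj⟩
      · exact Or.inr ⟨u, by simp [hu], hadj2⟩

lemma visit_glue (H : Setup G p A s t) {a b : W} (w : G.Walk a b) (j : ℕ) (hj : j + 1 < p)
    (ha : ∃ i : Fin p, a ∈ A i) (h1 : phi H a ≤ 2 * j + 2) (h2 : 2 * j + 2 ≤ phi H b) :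
    t ⟨j, Nat.lt_of_succ_lt hj⟩ ∈ w.support := by
  obtain ⟨v, hv, he⟩ := ivt H w (j + 1) (by omega) (by omega)
  have he' : phi H v = 2 * j + 2 := by omega
  rcases phi_even H hj he' with h | ⟨hvU, hnb⟩
  · exact h ▸ hv
  · rcases walk_pred w hv with h | ⟨u, hu, hadj⟩
    · exfalso
      obtain ⟨i, hi⟩ := ha
      exact hvU (Set.mem_iUnion.mpr ⟨i, h ▸ hi⟩)
    · have : u ∈ G.neighborSet v := hadj.symm
      rw [hnb] at this
      exact this ▸ hu

lemma phi_t_ge1 (H : Setup G p A s t) (q : Fin p) : 2 * (q : ℕ) + 1 ≤ phi H (t q) := by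
  have hqp := q.isLt
  by_cases hq : (q : ℕ) + 1 < p
  · have h := phi_t H hq
    have hqe : q = ⟨(q : ℕ), Nat.lt_of_succ_lt hq⟩ := Fin.ext rfl
    rw [← hqe] at h
    omega
  · have hqe : q = ⟨p - 1, Nat.sub_lt H.hp one_pos⟩ := Fin.ext (show (q : ℕ) = p - 1 by omega)
    have h := phi_tlast H
    rw [← hqe] at h
    omega

lemma support_dropLast {a b : W} (w : G.Walk a b) :
    w.support = w.support.dropLast ++ [b] := by
  induction w with
  | nil => simp
  | @cons a c b hadj w' ih =>
    rw [Walk.support_cons]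
    conv_lhs => rw [ih]
    rw [← List.cons_append]
    congr 1
    rw [w'.support_eq_cons, List.dropLast_cons₂]


lemma extract (H : Setup G p A s t) (q : Fin p) :
    ∀ {a b : W} (w : G.Walk a b), b = t q → ∀ (ha : a ∈ A q),
      s q ∉ w.support.tail → t q ∉ w.support.dropLast →
      ∃ wq : (G.induce (A q)).Walk ⟨a, ha⟩ ⟨t q, H.htA q⟩,
        ∀ v ∈ wq.support, (v : W) ∈ w.support := by
  intro a b w
  induction w with
  | nil =>
    rintro rfl ha h1 h2
    exact ⟨Walk.nil, by simp⟩
  | @cons a c b hadj w' ih =>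
    rintro rfl ha h1 h2
    -- basic invariant bookkeeping
    have h1' : s q ∉ w'.support := by
      simpa [Walk.support_cons] using h1
    have h1'' : s q ∉ w'.support.tail := by
      intro hx
      exact h1' (by rw [w'.support_eq_cons]; exact List.mem_cons_of_mem _ hx)
    have hsupp' := w'.support_eq_cons
    rw [Walk.support_cons, hsupp', List.dropLast_cons₂] at h2
    simp only [List.mem_cons, not_or] at h2
    have hne_a : a ≠ t q := fun h => h2.1 h.symm
    have h2'' : t q ∉ w'.support.dropLast := by
      rw [hsupp']
      exact h2.2
    -- case analysis on the edge from `a` to `c`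
    rcases H.hedge a c hadj with ⟨i, hai, hci⟩ | haU | hcU
    · by_cases hcq : c ∈ A q
      · obtain ⟨wq', hwq'⟩ := ih rfl hcq h1'' h2''
        have hadj' : (G.induce (A q)).Adj ⟨a, ha⟩ ⟨c, hcq⟩ := hadj
        refine ⟨Walk.cons hadj' wq', ?_⟩
        intro v hv
        rw [Walk.support_cons, List.mem_cons] at hv
        rcases hv with h | h
        · rw [h, Walk.support_cons]; exact List.mem_cons_self
        · rw [Walk.support_cons]; exact List.mem_cons_of_mem _ (hwq' v h)
      · exfalso
        have hiq : (i : ℕ) ≠ (q : ℕ) := fun h => hcq (by rwa [Fin.ext h] at hci)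
        rcases Nat.lt_or_ge (i : ℕ) (q : ℕ) with hlt | hge
        · -- a = t i = s q, step into the previous block: contradiction via visit_glue
          obtain ⟨hq1, haeq⟩ := mem_two H hai ha hlt
          have hasq : a = s q := by rw [haeq]; exact H.hglue i q hq1
          have hcs : c ≠ s q := fun h => h1' (h ▸ w'.start_mem_support)
          have hφc : phi H c ≤ 2 * (i : ℕ) + 1 := by
            rcases phi_mem_cases H i.isLt (v := c) (by exact hci) with h | h | h
            · omega
            · omega
            · exfalso
              obtain ⟨_, hct⟩ := phi_eq_top H i.isLt (v := c) (by exact hci) h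
              apply hcs
              rw [hct]
              show t i = s q
              exact H.hglue i q hq1
          have hj : (i : ℕ) + 1 < p := by have := q.isLt; omega
          have hvis := visit_glue H w' (i : ℕ) hj ⟨i, hci⟩ (by omega)
            (by have := phi_t_ge1 H q; omega)
          apply h1'
          have : t ⟨(i : ℕ), Nat.lt_of_succ_lt hj⟩ = s q := by
            have hie : (⟨(i : ℕ), Nat.lt_of_succ_lt hj⟩ : Fin p) = i := Fin.ext rfl
            rw [hie]
            exact H.hglue i q hq1
          rwa [this] at hvis
        · -- i > q: a = t q, contradiction
          have hgt : (q : ℕ) < (i : ℕ) := by omega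
          obtain ⟨_, haeq⟩ := mem_two H ha hai hgt
          exact hne_a haeq
    · exact absurd (Set.mem_iUnion.mpr ⟨q, ha⟩) haU
    · -- c is a pendant vertex
      obtain ⟨i2, hi2, hnb⟩ := H.hpend c hcU
      have hat : a = t i2 := by
        have : a ∈ G.neighborSet c := hadj.symm
        rwa [hnb] at this
      have hai2 : a ∈ A i2 := hat ▸ H.htA i2
      rcases Nat.lt_trichotomy (i2 : ℕ) (q : ℕ) with hlt | heq | hgt
      · -- a = t i2 = s q; pendant forces immediate return to s q
        exfalso
        obtain ⟨hq1, _⟩ := mem_two H hai2 ha hlt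
        have hasq : a = s q := by rw [hat]; exact H.hglue i2 q hq1
        have h1'w := h1'
        cases w' with
        | nil => exact hcU (Set.mem_iUnion.mpr ⟨q, H.htA q⟩)
        | cons hadj2 w'' =>
          rename_i d
          have hd : d = t i2 := by
            have : d ∈ G.neighborSet c := hadj2
            rwa [hnb] at this
          apply h1'w
          rw [Walk.support_cons]
          refine List.mem_cons_of_mem _ ?_
          have hds : d = s q := by rw [hd, ← hat, hasq]
          exact hds ▸ w''.start_mem_support
      · exfalso
        exact hne_a (by rwa [Fin.ext heq] at hat)
      · exfalso
        obtain ⟨_, haeq⟩ := mem_two H ha hai2 hgt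
        exact hne_a haeq


lemma hits (H : Setup G p A s t) (q : Fin p) (S : Set W)
    (hS : ∀ wq : (G.induce (A q)).Walk ⟨s q, H.hsA q⟩ ⟨t q, H.htA q⟩,
      ∃ x ∈ wq.support, (x : W) ∈ S)
    (w : G.Walk (s ⟨0, H.hp⟩) (t ⟨p - 1, Nat.sub_lt H.hp one_pos⟩)) :
    ∃ v ∈ w.support, v ∈ S := by
  classical
  have hqlt := q.isLt
  -- the walk visits `s q`
  have hsq_mem : s q ∈ w.support := by
    by_cases h0 : (q : ℕ) = 0
    · have : q = ⟨0, H.hp⟩ := Fin.ext h0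
      rw [this]
      exact w.start_mem_support
    · have hq1 : (q : ℕ) - 1 + 1 < p := by omega
      have hsg : s q = t ⟨(q : ℕ) - 1, Nat.lt_of_succ_lt hq1⟩ :=
        (H.hglue ⟨(q : ℕ) - 1, Nat.lt_of_succ_lt hq1⟩ q (by simp; omega)).symm
      rw [hsg]
      refine visit_glue H w ((q : ℕ) - 1) hq1 ⟨⟨0, H.hp⟩, H.hsA _⟩ ?_ ?_
      · rw [phi_s0 H]; omega
      · rw [phi_tlast H]; omega
  -- the suffix walk from the last visit of `s q`
  have hsq_mem' : s q ∈ w.reverse.support := by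
    rw [Walk.support_reverse]; exact List.mem_reverse.mpr hsq_mem
  set w1 : G.Walk (s q) (t ⟨p - 1, Nat.sub_lt H.hp one_pos⟩) :=
    (w.reverse.takeUntil (s q) hsq_mem').reverse with hw1
  have hw1sub : ∀ v ∈ w1.support, v ∈ w.support := by
    intro v hv
    rw [hw1, Walk.support_reverse, List.mem_reverse] at hv
    have := Walk.support_takeUntil_subset _ hsq_mem' hv
    rw [Walk.support_reverse, List.mem_reverse] at this
    exact this
  have hw1cnt : w1.support.count (s q) = 1 := by
    rw [hw1, Walk.support_reverse, List.count_reverse]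
    exact Walk.count_support_takeUntil_eq_one _ hsq_mem'
  have h1tail : s q ∉ w1.support.tail := by
    have hc := hw1cnt
    rw [w1.support_eq_cons, List.count_cons_self] at hc
    exact List.count_eq_zero.mp (by omega)
  -- the walk `w1` visits `t q`
  have htq_mem : t q ∈ w1.support := by
    by_cases hqp : (q : ℕ) + 1 < p
    · have hres := visit_glue H w1 (q : ℕ) hqp ⟨q, H.hsA q⟩ ?_ ?_
      · have : (⟨(q : ℕ), Nat.lt_of_succ_lt hqp⟩ : Fin p) = q := Fin.ext rfl
        rwa [this] at hres
      · by_cases h0 : (q : ℕ) = 0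
        · have : q = ⟨0, H.hp⟩ := Fin.ext h0
          rw [this, phi_s0 H]; omega
        · have hq1 : (q : ℕ) - 1 + 1 < p := by omega
          have hsg : s q = t ⟨(q : ℕ) - 1, Nat.lt_of_succ_lt hq1⟩ :=
            (H.hglue ⟨(q : ℕ) - 1, Nat.lt_of_succ_lt hq1⟩ q (by simp; omega)).symm
          rw [hsg, phi_t H hq1]
          omega
      · rw [phi_tlast H]; omega
    · have hqe : t q = t ⟨p - 1, Nat.sub_lt H.hp one_pos⟩ :=
        congrArg t (Fin.ext (show (q : ℕ) = p - 1 by omega))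
      rw [hqe]
      exact w1.end_mem_support
  set w2 : G.Walk (s q) (t q) := w1.takeUntil (t q) htq_mem with hw2
  have hw2sub : ∀ v ∈ w2.support, v ∈ w1.support := fun v hv =>
    Walk.support_takeUntil_subset _ htq_mem hv
  have h2tail : s q ∉ w2.support.tail := by
    have hspec := w1.take_spec htq_mem
    have hs : w2.support ++ (w1.dropUntil (t q) htq_mem).support.tail = w1.support := by
      rw [← Walk.support_append, hspec]
    have hcnt := congrArg (List.count (s q)) hs
    rw [List.count_append, hw1cnt] at hcnt
    have hc2 : w2.support.count (s q) ≤ 1 := by omega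
    rw [w2.support_eq_cons, List.count_cons_self] at hc2
    exact List.count_eq_zero.mp (by omega)
  have h2last : t q ∉ w2.support.dropLast := by
    have hcnt2 : w2.support.count (t q) = 1 := Walk.count_support_takeUntil_eq_one _ htq_mem
    intro hmem
    have hdl := support_dropLast w2
    rw [hdl, List.count_append] at hcnt2
    have hone : List.count (t q) [t q] = 1 := by simp
    have hpos : 0 < List.count (t q) w2.support.dropLast := List.count_pos_iff.mpr hmem
    omega
  obtain ⟨wq, hmap⟩ := extract H q w2 rfl (H.hsA q) h2tail h2last
  obtain ⟨x, hx, hxS⟩ := hS wq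
  exact ⟨↑x, hw1sub _ (hw2sub _ (hmap x hx)), hxS⟩


lemma glue_not_mem [Fintype W] (H : Setup G p A s t) {k ℓ : ℕ} {S : Set W}
    (hcount : ∀ i : Fin p, (i : ℕ) + 1 < p →
      {w : W | w ∉ (⋃ j, A j) ∧ G.neighborSet w = {t i}}.ncard = k + ℓ + 1)
    (hk : S.ncard ≤ k) (hl : (openNbhd G S).ncard ≤ ℓ)
    (j : Fin p) (hj : (j : ℕ) + 1 < p) : t j ∉ S := by
  intro hmem
  have hsub : {w : W | w ∉ (⋃ j', A j') ∧ G.neighborSet w = {t j}} ⊆ S ∪ openNbhd G S := by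
    rintro x ⟨hx1, hx2⟩
    by_cases hxS : x ∈ S
    · exact Or.inl hxS
    · refine Or.inr ⟨hxS, t j, hmem, ?_⟩
      have : t j ∈ G.neighborSet x := by rw [hx2]; rfl
      exact this.symm
  have hc := hcount j hj
  have hle := Set.ncard_le_ncard hsub (Set.toFinite _)
  have hun := Set.ncard_union_le S (openNbhd G S)
  omega

lemma concat (H : Setup G p A s t) {S : Set W}
    (hall : ∀ q : Fin p, ∃ wq : (G.induce (A q)).Walk ⟨s q, H.hsA q⟩ ⟨t q, H.htA q⟩,
      ∀ x ∈ wq.support, (x : W) ∉ S) :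
    ∀ n (hn : n < p), ∃ w : G.Walk (s ⟨0, H.hp⟩) (t ⟨n, hn⟩), ∀ v ∈ w.support, v ∉ S := by
  intro n
  induction n with
  | zero =>
    intro hn
    obtain ⟨w0, h0⟩ := hall ⟨0, hn⟩
    refine ⟨w0.map (SimpleGraph.Embedding.induce (A ⟨0, hn⟩)).toHom, ?_⟩
    intro v hv
    have hv : v ∈ w0.support.map (SimpleGraph.Embedding.induce (G := G) (A ⟨0, hn⟩)).toHom := by
      have e := Walk.support_map (SimpleGraph.Embedding.induce (G := G) (A ⟨0, hn⟩)).toHom w0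
      rw [← e]; exact hv
    obtain ⟨x, hx, rfl⟩ := List.mem_map.mp hv
    exact h0 x hx
  | succ m ih =>
    intro hn
    have hm : m < p := by omega
    obtain ⟨w, hw⟩ := ih hm
    obtain ⟨wq, hq⟩ := hall ⟨m + 1, hn⟩
    have hg : t ⟨m, hm⟩ = s ⟨m + 1, hn⟩ := H.hglue _ _ rfl
    refine ⟨(w.copy rfl hg).append (wq.map (SimpleGraph.Embedding.induce _).toHom), ?_⟩
    intro v hv
    have hv : v ∈ (w.copy rfl hg).support ++
        (wq.map (SimpleGraph.Embedding.induce (G := G) (A ⟨m + 1, hn⟩)).toHom).support.tail := by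
      have e := Walk.support_append (w.copy rfl hg)
        (wq.map (SimpleGraph.Embedding.induce (G := G) (A ⟨m + 1, hn⟩)).toHom)
      exact Eq.mp (congrArg (fun l => v ∈ l) e) hv
    rw [List.mem_append] at hv
    rcases hv with h | h
    · rw [Walk.support_copy] at h
      exact hw v h
    · have h' := List.mem_of_mem_tail h
      rw [Walk.support_map] at h'
      obtain ⟨x, hx, rfl⟩ := List.mem_map.mp h'
      exact hq x hx

end SmallSecluded

open SmallSecluded SimpleGraph in
theorem small_secluded_separator_or_composition {W : Type*} [Fintype W]
    (G : SimpleGraph W) (p k ℓ : ℕ) (hp : 0 < p)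
    (A : Fin p → Set W) (s t : Fin p → W)
    (hst : ∀ i, s i ≠ t i)
    (hsA : ∀ i, s i ∈ A i) (htA : ∀ i, t i ∈ A i)
    -- consecutive blocks are glued at `t i = s (i+1)`:
    (hglue : ∀ i j : Fin p, (j : ℕ) = (i : ℕ) + 1 → t i = s j)
    (hinter : ∀ i j : Fin p, i < j →
      (((j : ℕ) = (i : ℕ) + 1 → A i ∩ A j = {t i}) ∧
       ((j : ℕ) ≠ (i : ℕ) + 1 → A i ∩ A j = ∅)))
    -- all remaining vertices are pendant (degree-one) neighbors of the glue
    -- vertices `st_i = t i`, `k + ℓ + 1` of them for each: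
    (hpend : ∀ w : W, w ∉ (⋃ i, A i) →
      ∃ i : Fin p, (i : ℕ) + 1 < p ∧ G.neighborSet w = {t i})
    (hcount : ∀ i : Fin p, (i : ℕ) + 1 < p →
      {w : W | w ∉ (⋃ j, A j) ∧ G.neighborSet w = {t i}}.ncard = k + ℓ + 1)
    -- every edge lies inside a block or is a pendant edge:
    (hedge : ∀ a b : W, G.Adj a b →
      (∃ i, a ∈ A i ∧ b ∈ A i) ∨ a ∉ (⋃ i, A i) ∨ b ∉ (⋃ i, A i)) :
    (∃ S : Set W,
        Separates G (s ⟨0, hp⟩) (t ⟨p - 1, Nat.sub_lt hp one_pos⟩) S ∧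
        S.ncard ≤ k ∧ (openNbhd G S).ncard ≤ ℓ) ↔
      (∃ q : Fin p, ∃ Sq : Set (A q),
        Separates (G.induce (A q)) ⟨s q, hsA q⟩ ⟨t q, htA q⟩ Sq ∧
        Sq.ncard ≤ k ∧ (openNbhd (G.induce (A q)) Sq).ncard ≤ ℓ) := by
  have H : Setup G p A s t := ⟨hp, hst, hsA, htA, hglue, hinter, hpend, hedge⟩
  constructor
  · -- forward direction
    rintro ⟨S, ⟨hs0, ht0, hsepw⟩, hk, hl⟩
    have hglueS : ∀ j : Fin p, (j : ℕ) + 1 < p → t j ∉ S :=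
      glue_not_mem H hcount hk hl
    have hq : ∃ q : Fin p, ∀ wq : (G.induce (A q)).Walk ⟨s q, hsA q⟩ ⟨t q, htA q⟩,
        ∃ x ∈ wq.support, (x : W) ∈ S := by
      by_contra hcon
      push_neg at hcon
      obtain ⟨w, hw⟩ := concat H hcon (p - 1) (Nat.sub_lt hp one_pos)
      obtain ⟨v, hv, hvS⟩ := hsepw w
      exact hw v hv hvS
    obtain ⟨q, hq⟩ := hq
    have hqlt := q.isLt
    have hsqS : s q ∉ S := by
      by_cases h0 : (q : ℕ) = 0
      · have : q = ⟨0, hp⟩ := Fin.ext h0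
        rw [this]; exact hs0
      · have hq1 : (q : ℕ) - 1 + 1 < p := by omega
        rw [show s q = t ⟨(q : ℕ) - 1, Nat.lt_of_succ_lt hq1⟩ from
          (H.hglue ⟨(q : ℕ) - 1, Nat.lt_of_succ_lt hq1⟩ q (by simp; omega)).symm]
        exact hglueS _ hq1
    have htqS : t q ∉ S := by
      by_cases hqp : (q : ℕ) + 1 < p
      · exact hglueS q hqp
      · have : q = ⟨p - 1, Nat.sub_lt hp one_pos⟩ := Fin.ext (show (q : ℕ) = p - 1 by omega)
        rw [this]; exact ht0
    refine ⟨q, Subtype.val ⁻¹' S, ⟨hsqS, htqS, fun wq => hq wq⟩, ?_, ?_⟩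
    · calc (Subtype.val ⁻¹' S : Set (A q)).ncard
          = (Subtype.val '' (Subtype.val ⁻¹' S : Set (A q))).ncard :=
            (Set.ncard_image_of_injective _ Subtype.val_injective).symm
        _ ≤ S.ncard := Set.ncard_le_ncard (Set.image_preimage_subset _ _) (Set.toFinite _)
        _ ≤ k := hk
    · have hsub : Subtype.val '' openNbhd (G.induce (A q)) (Subtype.val ⁻¹' S) ⊆
          openNbhd G S := by
        rintro _ ⟨x, ⟨hx1, u, hu1, hu2⟩, rfl⟩
        exact ⟨hx1, ↑u, hu1, hu2⟩
      calc (openNbhd (G.induce (A q)) (Subtype.val ⁻¹' S)).ncard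
          = (Subtype.val '' openNbhd (G.induce (A q)) (Subtype.val ⁻¹' S)).ncard :=
            (Set.ncard_image_of_injective _ Subtype.val_injective).symm
        _ ≤ (openNbhd G S).ncard := Set.ncard_le_ncard hsub (Set.toFinite _)
        _ ≤ ℓ := hl
  · -- backward direction
    rintro ⟨q, Sq, ⟨hsq, htq, hsepq⟩, hk, hl⟩
    have hqlt := q.isLt
    refine ⟨Subtype.val '' Sq, ⟨?_, ?_, ?_⟩, ?_, ?_⟩
    · rintro ⟨x, hxS, hxe⟩
      by_cases h0 : (q : ℕ) = 0
      · have hq0 : q = ⟨0, hp⟩ := Fin.ext h0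
        apply hsq
        have : x = ⟨s q, hsA q⟩ := Subtype.ext (by rw [hxe, hq0])
        rwa [this] at hxS
      · have hx2 : s ⟨0, hp⟩ ∈ A q := hxe ▸ x.2
        obtain ⟨hq1, he⟩ := mem_two H (H.hsA ⟨0, hp⟩) hx2 (by simpa using Nat.pos_of_ne_zero h0)
        exact H.hst ⟨0, hp⟩ he
    · rintro ⟨x, hxS, hxe⟩
      by_cases hqp : (q : ℕ) = p - 1
      · apply htq
        have hqe : t ⟨p - 1, Nat.sub_lt hp one_pos⟩ = t q :=
          congrArg t (Fin.ext (by simp [hqp]))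
        have : x = ⟨t q, htA q⟩ := Subtype.ext (by rw [hxe, hqe])
        rwa [this] at hxS
      · have hx2 : t ⟨p - 1, Nat.sub_lt hp one_pos⟩ ∈ A q := hxe ▸ x.2
        obtain ⟨hq1, he⟩ := mem_two H hx2 (H.htA ⟨p - 1, Nat.sub_lt hp one_pos⟩)
          (by simp; omega)
        exact t_ne_succ H hq1 he.symm
    · intro w
      exact hits H q (Subtype.val '' Sq)
        (fun wq => (hsepq wq).imp (fun x hx => ⟨hx.1, Set.mem_image_of_mem _ hx.2⟩)) w
    · calc (Subtype.val '' Sq).ncard = Sq.ncard :=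
            Set.ncard_image_of_injective _ Subtype.val_injective
        _ ≤ k := hk
    · have hsub : openNbhd G (Subtype.val '' Sq) ⊆
          Subtype.val '' openNbhd (G.induce (A q)) Sq := by
        rintro v ⟨hvS, u, ⟨x, hxSq, rfl⟩, hadj⟩
        have hxns : (x : W) ≠ s q := by
          intro h
          exact hsq (by rwa [show x = ⟨s q, hsA q⟩ from Subtype.ext h] at hxSq)
        have hxnt : (x : W) ≠ t q := by
          intro h
          exact htq (by rwa [show x = ⟨t q, htA q⟩ from Subtype.ext h] at hxSq)
        have hvq : v ∈ A q := by
          rcases H.hedge (↑x) v hadj with ⟨i, hxi, hvi⟩ | hxU | hvU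
          · rcases Nat.lt_trichotomy (i : ℕ) (q : ℕ) with hlt | heq | hgt
            · exfalso
              obtain ⟨hq1, he⟩ := mem_two H hxi x.2 hlt
              exact hxns (by rw [he]; exact H.hglue i q hq1)
            · rwa [Fin.ext heq] at hvi
            · exfalso
              obtain ⟨hq1, he⟩ := mem_two H x.2 hxi hgt
              exact hxnt he
          · exact absurd (Set.mem_iUnion.mpr ⟨q, x.2⟩) hxU
          · exfalso
            obtain ⟨i2, hi2, hnb⟩ := H.hpend v hvU
            have hxt : (x : W) = t i2 := by
              have : (x : W) ∈ G.neighborSet v := hadj.symm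
              rwa [hnb] at this
            have hxi2 : (x : W) ∈ A i2 := hxt ▸ H.htA i2
            rcases Nat.lt_trichotomy (i2 : ℕ) (q : ℕ) with hlt | heq | hgt
            · obtain ⟨hq1, _⟩ := mem_two H hxi2 x.2 hlt
              exact hxns (by rw [hxt]; exact H.hglue i2 q hq1)
            · exact hxnt (by rwa [Fin.ext heq] at hxt)
            · obtain ⟨hq1, he⟩ := mem_two H x.2 hxi2 hgt
              exact hxnt he
        refine ⟨⟨v, hvq⟩, ⟨?_, x, hxSq, hadj⟩, rfl⟩
        intro hmem
        exact hvS (Set.mem_image_of_mem _ hmem)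
      calc (openNbhd G (Subtype.val '' Sq)).ncard
          ≤ (Subtype.val '' openNbhd (G.induce (A q)) Sq).ncard :=
            Set.ncard_le_ncard hsub (Set.toFinite _)
        _ = (openNbhd (G.induce (A q)) Sq).ncard :=
            Set.ncard_image_of_injective _ Subtype.val_injective
        _ ≤ ℓ := hl
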